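/- Let K be a Hermitian D×D complex matrix with ‖K‖ ≤ 1, let Π be an orthogonal projector with N := tr Π, and let reals Γ, Δ ≥ 0 satisfy KΠ = ΠK, KΠ ≥ √Γ·Π in the Loewner order, and ‖(I−Π)K(I−Π)‖ ≤ √Δ. Then for every natural number n, N·Γⁿ ≤ tr(K^{2n}) ≤ N + Δⁿ·(D − N). -/

import Mathlib

open scoped Matrix.Norms.L2Operator ComplexOrder
open Matrix

variable {D : ℕ}

lemma aux_trace_re_nonneg {M : Matrix (Fin D) (Fin D) ℂ} (hM : M.PosSemidef) :
    0 ≤ M.trace.re := by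
  have h : ∀ i, 0 ≤ (M i i).re := by
    intro i
    have := hM.re_dotProduct_nonneg (Pi.single i 1)
    simpa [Matrix.mulVec_single, dotProduct, Pi.single_apply, apply_ite] using this
  simp only [Matrix.trace, Matrix.diag, Complex.re_sum]
  exact Finset.sum_nonneg fun i _ => h i

open scoped MatrixOrder in
lemma aux_trace_re_mul_nonneg {X Y : Matrix (Fin D) (Fin D) ℂ}
    (hX : X.PosSemidef) (hY : Y.PosSemidef) : 0 ≤ (X * Y).trace.re := by
  have h1 : (X * Y).trace = (CFC.sqrt X * Y * CFC.sqrt X).trace := by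
    conv_lhs => rw [← CFC.sqrt_mul_sqrt_self X hX.nonneg]
    rw [Matrix.mul_assoc, Matrix.trace_mul_comm]
  rw [h1]
  refine aux_trace_re_nonneg ?_
  have := hY.conjTranspose_mul_mul_same (CFC.sqrt X)
  rwa [(Matrix.nonneg_iff_posSemidef.mp (CFC.sqrt_nonneg X)).isHermitian.eq] at this

lemma aux_trace_re_le {X Y : Matrix (Fin D) (Fin D) ℂ} (h : (Y - X).PosSemidef) :
    X.trace.re ≤ Y.trace.re := by
  have := aux_trace_re_nonneg h
  rw [Matrix.trace_sub, Complex.sub_re] at this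
  linarith

lemma aux_smul_posSemidef {r : ℝ} (hr : 0 ≤ r) {B : Matrix (Fin D) (Fin D) ℂ}
    (hB : B.PosSemidef) : (((r : ℂ)) • B).PosSemidef := by
  refine posSemidef_iff_dotProduct_mulVec.mpr ⟨?_, fun x => ?_⟩
  · unfold Matrix.IsHermitian
    rw [Matrix.conjTranspose_smul, hB.1.eq, Complex.star_def, Complex.conj_ofReal]
  · rw [Matrix.smul_mulVec, dotProduct_smul]
    exact smul_nonneg (Complex.zero_le_real.mpr hr) (hB.dotProduct_mulVec_nonneg x)

variable {D : ℕ}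

lemma aux_dot_self (y : Fin D → ℂ) :
    star y ⬝ᵥ y = ((‖(WithLp.equiv 2 (Fin D → ℂ)).symm y‖ ^ 2 : ℝ) : ℂ) := by
  have := EuclideanSpace.inner_toLp_toLp (𝕜 := ℂ) y y
  rw [dotProduct_comm, ← this, inner_self_eq_norm_sq_to_K]
  norm_cast

lemma aux_quad_eq (B : Matrix (Fin D) (Fin D) ℂ) (x : Fin D → ℂ) :
    star x ⬝ᵥ ((Bᴴ * B) *ᵥ x)
      = ((‖(WithLp.equiv 2 (Fin D → ℂ)).symm (B *ᵥ x)‖ ^ 2 : ℝ) : ℂ) := by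
  rw [← Matrix.mulVec_mulVec, Matrix.dotProduct_mulVec, ← Matrix.star_mulVec]
  exact aux_dot_self _

lemma aux_norm_mulVec (B : Matrix (Fin D) (Fin D) ℂ) (y : Fin D → ℂ) :
    ‖(WithLp.equiv 2 (Fin D → ℂ)).symm (B *ᵥ y)‖
      ≤ ‖B‖ * ‖(WithLp.equiv 2 (Fin D → ℂ)).symm y‖ :=
  B.l2_opNorm_mulVec ((WithLp.equiv 2 (Fin D → ℂ)).symm y)

lemma aux_key_psd {Q B : Matrix (Fin D) (Fin D) ℂ} (hQ : Q.IsHermitian) (hQ2 : Q * Q = Q)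
    (hBQ : B * Q = B) {c : ℝ} (hc : 0 ≤ c) (hB : ‖B‖ ≤ c) :
    (((c ^ 2 : ℝ) : ℂ) • Q - Bᴴ * B).PosSemidef := by
  have hQQ : Qᴴ * Q = Q := by rw [hQ.eq, hQ2]
  refine posSemidef_iff_dotProduct_mulVec.mpr ⟨?_, fun x => ?_⟩
  · unfold Matrix.IsHermitian
    rw [Matrix.conjTranspose_sub, Matrix.conjTranspose_smul, Matrix.conjTranspose_mul,
      Matrix.conjTranspose_conjTranspose, hQ.eq, Complex.star_def, Complex.conj_ofReal]
  · have hq := aux_quad_eq Q x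
    rw [hQQ] at hq
    have hbx : B *ᵥ x = B *ᵥ (Q *ᵥ x) := by rw [Matrix.mulVec_mulVec, hBQ]
    set nq := ‖(WithLp.equiv 2 (Fin D → ℂ)).symm (Q *ᵥ x)‖ with hnq
    have hnb : ‖(WithLp.equiv 2 (Fin D → ℂ)).symm (B *ᵥ x)‖ ≤ c * nq := by
      rw [hbx]
      exact le_trans (aux_norm_mulVec B (Q *ᵥ x))
        (mul_le_mul_of_nonneg_right hB (norm_nonneg _))
    set nb := ‖(WithLp.equiv 2 (Fin D → ℂ)).symm (B *ᵥ x)‖ with hnbdef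
    rw [Matrix.sub_mulVec, dotProduct_sub, Matrix.smul_mulVec,
      dotProduct_smul, aux_quad_eq, hq, smul_eq_mul]
    have h1 : ((c ^ 2 : ℝ) : ℂ) * ((nq ^ 2 : ℝ) : ℂ) - ((nb ^ 2 : ℝ) : ℂ)
        = ((c ^ 2 * nq ^ 2 - nb ^ 2 : ℝ) : ℂ) := by push_cast; ring
    rw [h1]
    refine Complex.zero_le_real.mpr ?_
    nlinarith [norm_nonneg ((WithLp.equiv 2 (Fin D → ℂ)).symm (B *ᵥ x)), norm_nonneg ((WithLp.equiv 2 (Fin D → ℂ)).symm (Q *ᵥ x))]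

lemma aux_re_ofReal_mul (r : ℝ) (z : ℂ) : ((r : ℂ) * z).re = r * z.re := by
  simp [Complex.mul_re]

lemma aux_pow_mul {K P : Matrix (Fin D) (Fin D) ℂ} (hcomm : K * P = P * K)
    (hPproj : P * P = P) : ∀ m : ℕ, (K * P) ^ (m + 1) = K ^ (m + 1) * P := by
  intro m
  induction m with
  | zero => simp
  | succ m ih =>
    calc (K * P) ^ (m + 1 + 1) = (K * P) ^ (m + 1) * (K * P) := by rw [pow_succ]
    _ = K ^ (m + 1) * (P * K) * P := by rw [ih]; noncomm_ring
    _ = K ^ (m + 1) * (K * P) * P := by rw [← hcomm]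
    _ = K ^ (m + 1 + 1) * (P * P) := by rw [pow_succ]; noncomm_ring
    _ = K ^ (m + 1 + 1) * P := by rw [hPproj]

lemma aux_pow_mul' {K P : Matrix (Fin D) (Fin D) ℂ} (hcomm : K * P = P * K)
    (hPproj : P * P = P) : ∀ m : ℕ, (K * P) ^ m * P = K ^ m * P := by
  intro m
  cases m with
  | zero => simp
  | succ m => rw [aux_pow_mul hcomm hPproj, Matrix.mul_assoc, hPproj]

lemma aux_sq_proj_psd {R Q : Matrix (Fin D) (Fin D) ℂ} (hR : R.IsHermitian)
    (hQ : Q.IsHermitian) (hQ2 : Q * Q = Q) (hcm : R * Q = Q * R) (m : ℕ) :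
    (R ^ (2 * m) * Q).PosSemidef := by
  have hcmC : Commute R Q := hcm
  have hc2 : Q * R ^ (2 * m) = R ^ (2 * m) * Q := (hcmC.symm.pow_right (2 * m)).eq
  have key : (R ^ m * Q)ᴴ * (R ^ m * Q) = R ^ (2 * m) * Q := by
    rw [Matrix.conjTranspose_mul, hQ.eq, (hR.pow m).eq]
    calc Q * R ^ m * (R ^ m * Q) = Q * (R ^ m * R ^ m) * Q := by noncomm_ring
    _ = Q * R ^ (2 * m) * Q := by rw [← pow_add, two_mul]
    _ = R ^ (2 * m) * Q * Q := by rw [hc2]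
    _ = R ^ (2 * m) * Q := by rw [Matrix.mul_assoc, hQ2]
  rw [← key]
  exact Matrix.posSemidef_conjTranspose_mul_self _

set_option maxHeartbeats 1000000 in
/-- Two-sided trace bounds on powers of an AGSP: `N·Γⁿ ≤ tr(K^{2n}) ≤ N + Δⁿ·(D - N)`. -/
theorem stmt19 (D : ℕ) (hD : 1 ≤ D)
    (K P : Matrix (Fin D) (Fin D) ℂ)
    (hK : K.IsHermitian) (hKnorm : ‖K‖ ≤ 1)
    (hPherm : P.IsHermitian) (hPproj : P * P = P)
    (Γ Δ : ℝ) (hΓ : 0 ≤ Γ) (hΔ : 0 ≤ Δ)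
    (hcomm : K * P = P * K)
    (hGamma : (K * P - (Real.sqrt Γ : ℂ) • P).PosSemidef)
    (hDelta : ‖(1 - P) * K * (1 - P)‖ ≤ Real.sqrt Δ)
    (n : ℕ) :
    P.trace.re * Γ ^ n ≤ (K ^ (2 * n)).trace.re ∧
      (K ^ (2 * n)).trace.re ≤ P.trace.re + Δ ^ n * ((D : ℝ) - P.trace.re) := by
  classical
  have hQherm : (1 - P : Matrix (Fin D) (Fin D) ℂ).IsHermitian := by
    unfold Matrix.IsHermitian
    rw [Matrix.conjTranspose_sub, Matrix.conjTranspose_one, hPherm.eq]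
  have hQproj : (1 - P : Matrix (Fin D) (Fin D) ℂ) * (1 - P) = 1 - P := by
    noncomm_ring [hPproj]
  have hcommQ : K * (1 - P) = (1 - P) * K := by
    noncomm_ring [hcomm]
  have cKP : Commute K P := hcomm
  have hMnorm : ‖K * (1 - P)‖ ≤ Real.sqrt Δ := by
    have h : (1 - P : Matrix (Fin D) (Fin D) ℂ) * K * (1 - P) = K * (1 - P) := by
      rw [← hcommQ, Matrix.mul_assoc, hQproj]
    rwa [h] at hDelta
  have hMherm : (K * (1 - P)).IsHermitian := by
    unfold Matrix.IsHermitian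
    rw [Matrix.conjTranspose_mul, hQherm.eq, hK.eq, hcommQ]
  have htrQ : (1 - P : Matrix (Fin D) (Fin D) ℂ).trace.re = (D : ℝ) - P.trace.re := by
    rw [Matrix.trace_sub, Matrix.trace_one, Complex.sub_re]
    simp
  have hsplit : (K ^ (2 * n)).trace.re
      = (K ^ (2 * n) * P).trace.re + (K ^ (2 * n) * (1 - P)).trace.re := by
    have h : (K ^ (2 * n)).trace = (K ^ (2 * n) * P).trace + (K ^ (2 * n) * (1 - P)).trace := by
      rw [← Matrix.trace_add, ← Matrix.mul_add]
      congr 1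
      noncomm_ring
    rw [h, Complex.add_re]
  have hKQpsd : (K ^ (2 * n) * (1 - P)).PosSemidef :=
    aux_sq_proj_psd hK hQherm hQproj hcommQ n
  ----------------------------------------------------------------
  -- Lower bound
  ----------------------------------------------------------------
  have hAP : K * P * P = K * P := by rw [Matrix.mul_assoc, hPproj]
  have hPA : P * (K * P) = K * P := by rw [← Matrix.mul_assoc, ← hcomm, Matrix.mul_assoc, hPproj]
  have hAherm : (K * P).IsHermitian := by
    unfold Matrix.IsHermitian
    rw [Matrix.conjTranspose_mul, hPherm.eq, hK.eq, hcomm]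
  have hcommA : (K * P) * P = P * (K * P) := by rw [hAP, hPA]
  have hB0P : (K * P - ((Real.sqrt Γ : ℝ) : ℂ) • P) * P = K * P - ((Real.sqrt Γ : ℝ) : ℂ) • P := by
    rw [Matrix.sub_mul, hAP, Matrix.smul_mul, hPproj]
  have hPB0 : P * (K * P - ((Real.sqrt Γ : ℝ) : ℂ) • P) = K * P - ((Real.sqrt Γ : ℝ) : ℂ) • P := by
    rw [Matrix.mul_sub, hPA, Matrix.mul_smul, hPproj]
  have hcc : ((Real.sqrt Γ : ℝ) : ℂ) * ((Real.sqrt Γ : ℝ) : ℂ) = ((Γ : ℝ) : ℂ) := by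
    rw [← Complex.ofReal_mul, Real.mul_self_sqrt hΓ]
  have hexp : (K * P) * (K * P) - ((Γ : ℝ) : ℂ) • P
      = (K * P - ((Real.sqrt Γ : ℝ) : ℂ) • P) * (K * P - ((Real.sqrt Γ : ℝ) : ℂ) • P)
        + ((2 * Real.sqrt Γ : ℝ) : ℂ) • (K * P - ((Real.sqrt Γ : ℝ) : ℂ) • P) := by
    have hA_eq : K * P = (K * P - ((Real.sqrt Γ : ℝ) : ℂ) • P) + ((Real.sqrt Γ : ℝ) : ℂ) • P := by
      rw [sub_add_cancel]
    conv_lhs => rw [hA_eq]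
    rw [Matrix.add_mul, Matrix.mul_add, Matrix.mul_add, Matrix.mul_smul, Matrix.smul_mul,
      Matrix.smul_mul, Matrix.mul_smul, hB0P, hPB0, hPproj, smul_smul, hcc]
    push_cast
    module
  have hA2psd : ((K * P) * (K * P) - ((Γ : ℝ) : ℂ) • P).PosSemidef := by
    rw [hexp]
    refine Matrix.PosSemidef.add ?_ ?_
    · have h := Matrix.posSemidef_conjTranspose_mul_self (K * P - ((Real.sqrt Γ : ℝ) : ℂ) • P)
      rwa [hGamma.isHermitian.eq] at h
    · exact aux_smul_posSemidef (by positivity) hGamma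
  have hstep : ∀ m : ℕ, Γ * (((K * P) ^ (2 * m) * P).trace.re)
      ≤ (((K * P) ^ (2 * (m + 1)) * P).trace.re) := by
    intro m
    have hX : ((K * P) ^ (2 * m) * P).PosSemidef :=
      aux_sq_proj_psd hAherm hPherm hPproj hcommA m
    have h0 := aux_trace_re_mul_nonneg hX hA2psd
    have hXP : ((K * P) ^ (2 * m) * P) * P = (K * P) ^ (2 * m) * P := by
      rw [Matrix.mul_assoc, hPproj]
    have heq : ((K * P) ^ (2 * m) * P) * ((K * P) * (K * P) - ((Γ : ℝ) : ℂ) • P)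
        = (K * P) ^ (2 * (m + 1)) * P - ((Γ : ℝ) : ℂ) • ((K * P) ^ (2 * m) * P) := by
      rw [Matrix.mul_sub, Matrix.mul_smul, hXP]
      congr 1
      have h2 : 2 * (m + 1) = 2 * m + 1 + 1 := by ring
      rw [h2, pow_succ, pow_succ]
      calc (K * P) ^ (2 * m) * P * ((K * P) * (K * P))
          = (K * P) ^ (2 * m) * ((P * (K * P)) * (K * P)) := by noncomm_ring
      _ = (K * P) ^ (2 * m) * (((K * P) * P) * (K * P)) := by rw [hPA, hAP]
      _ = (K * P) ^ (2 * m) * ((K * P) * (P * (K * P))) := by noncomm_ring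
      _ = (K * P) ^ (2 * m) * ((K * P) * ((K * P) * P)) := by rw [hPA, hAP]
      _ = (K * P) ^ (2 * m) * (K * P) * (K * P) * P := by noncomm_ring
    rw [heq, Matrix.trace_sub, Matrix.trace_smul, smul_eq_mul, Complex.sub_re,
      aux_re_ofReal_mul] at h0
    linarith
  have hlow : ∀ m : ℕ, Γ ^ m * P.trace.re ≤ ((K * P) ^ (2 * m) * P).trace.re := by
    intro m
    induction m with
    | zero => simp
    | succ m ih =>
      calc Γ ^ (m + 1) * P.trace.re = Γ * (Γ ^ m * P.trace.re) := by ring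
      _ ≤ Γ * (((K * P) ^ (2 * m) * P).trace.re) := mul_le_mul_of_nonneg_left ih hΓ
      _ ≤ _ := hstep m
  have hlower : P.trace.re * Γ ^ n ≤ (K ^ (2 * n)).trace.re := by
    have h1 := hlow n
    rw [aux_pow_mul' hcomm hPproj (2 * n)] at h1
    have h2 := aux_trace_re_nonneg hKQpsd
    rw [hsplit]
    linarith
  ----------------------------------------------------------------
  -- Upper bound
  ----------------------------------------------------------------
  refine ⟨hlower, ?_⟩
  rcases n with - | m
  · simp [Matrix.trace_one]
  · -- n = m + 1
    have hKn : ∀ l : ℕ, ‖K ^ (l + 1)‖ ≤ 1 := by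
      intro l
      induction l with
      | zero => rwa [pow_one]
      | succ l ih =>
        rw [pow_succ]
        calc ‖K ^ (l + 1) * K‖ ≤ ‖K ^ (l + 1)‖ * ‖K‖ := Matrix.l2_opNorm_mul _ _
        _ ≤ 1 := mul_le_one₀ ih (norm_nonneg _) hKnorm
    have hMn : ∀ l : ℕ, ‖(K * (1 - P)) ^ (l + 1)‖ ≤ Real.sqrt Δ ^ (l + 1) := by
      intro l
      induction l with
      | zero => rwa [pow_one, pow_one]
      | succ l ih =>
        rw [pow_succ, pow_succ]
        calc ‖(K * (1 - P)) ^ (l + 1) * (K * (1 - P))‖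
            ≤ ‖(K * (1 - P)) ^ (l + 1)‖ * ‖K * (1 - P)‖ := Matrix.l2_opNorm_mul _ _
        _ ≤ Real.sqrt Δ ^ (l + 1) * Real.sqrt Δ :=
          mul_le_mul ih hMnorm (norm_nonneg _) (by positivity)
    have h1K : ((1 : Matrix (Fin D) (Fin D) ℂ) - K ^ (2 * (m + 1))).PosSemidef := by
      have h := aux_key_psd (Q := (1 : Matrix (Fin D) (Fin D) ℂ)) (B := K ^ (m + 1))
        Matrix.isHermitian_one (Matrix.one_mul 1) (Matrix.mul_one _) zero_le_one (hKn m)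
      simpa [(hK.pow (m + 1)).eq, ← pow_add, two_mul] using h
    have hPpart : (K ^ (2 * (m + 1)) * P).trace.re ≤ P.trace.re := by
      refine aux_trace_re_le ?_
      have hpsd := h1K.conjTranspose_mul_mul_same P
      have heq : Pᴴ * ((1 : Matrix (Fin D) (Fin D) ℂ) - K ^ (2 * (m + 1))) * P
          = P - K ^ (2 * (m + 1)) * P := by
        rw [hPherm.eq]
        have hc : P * K ^ (2 * (m + 1)) = K ^ (2 * (m + 1)) * P :=
          (cKP.symm.pow_right (2 * (m + 1))).eq
        calc P * (1 - K ^ (2 * (m + 1))) * P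
            = P * P - P * K ^ (2 * (m + 1)) * P := by noncomm_ring
        _ = P - K ^ (2 * (m + 1)) * P := by
            rw [hPproj, hc, Matrix.mul_assoc, hPproj]
      rwa [heq] at hpsd
    have hMQ : (K * (1 - P)) ^ (m + 1) * (1 - P) = (K * (1 - P)) ^ (m + 1) := by
      rw [aux_pow_mul hcommQ hQproj m, Matrix.mul_assoc, hQproj]
    have hkey := aux_key_psd hQherm hQproj hMQ
      (c := Real.sqrt Δ ^ (m + 1)) (by positivity) (hMn m)
    have hc2 : ((Real.sqrt Δ ^ (m + 1)) ^ 2 : ℝ) = Δ ^ (m + 1) := by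
      rw [← pow_mul, mul_comm, pow_mul, Real.sq_sqrt hΔ]
    have hMM : ((K * (1 - P)) ^ (m + 1))ᴴ * (K * (1 - P)) ^ (m + 1)
        = K ^ (2 * (m + 1)) * (1 - P) := by
      rw [(hMherm.pow (m + 1)).eq, ← pow_add]
      have h : m + 1 + (m + 1) = 2 * (m + 1) := by ring
      rw [h]
      have h' : 2 * (m + 1) = 2 * m + 1 + 1 := by ring
      rw [h']
      exact aux_pow_mul hcommQ hQproj (2 * m + 1)
    rw [hc2, hMM] at hkey
    have hQpart : (K ^ (2 * (m + 1)) * (1 - P)).trace.re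
        ≤ Δ ^ (m + 1) * ((D : ℝ) - P.trace.re) := by
      have h := aux_trace_re_le hkey
      rwa [Matrix.trace_smul, smul_eq_mul, aux_re_ofReal_mul, htrQ] at h
    rw [hsplit]
    linarith
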